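/- For every ℓ ≥ 1 there exists an N-free order R_ℓ with 3ℓ elements whose arc diagram has width 1 but whose activity α(R_ℓ) is at least ℓ; hence bounded width of the arc diagram does not imply bounded activity. -/

import Mathlib

set_option maxHeartbeats 2000000


/-- One-step reachability between vertices of a directed multigraph. -/
def vStep {V E : Type*} (src dst : E → V) (u v : V) : Prop :=
  ∃ e : E, src e = u ∧ dst e = v

/-- The line-digraph order on arcs: `x < y` iff some directed path has
first arc `x` and last arc `y`. -/
def lineLT {V E : Type*} (src dst : E → V) (x y : E) : Prop :=
  Relation.TransGen (fun a b => dst a = src b) x y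

/-- The active set after the first `i` elements of the listing `L` of the
arcs. -/
def activeSet {V E : Type*} {n : ℕ} (src dst : E → V) (L : E ≃ Fin n) (i : ℕ) :
    Set V :=
  {v : V | ∃ a b : E, ((L a : ℕ) < i ∧ i ≤ (L b : ℕ)) ∧ dst a = v ∧ src b = v}

/-- Source map of the witness dag: arcs `e < 2ℓ` are spine arcs `e → e+1`,
arc `2ℓ` is a duplicate `0 → 1`, arcs `2ℓ+j` (`1 ≤ j ≤ ℓ-1`) are long arcs
`j → 2ℓ-j`. -/
def eSrc (ℓ : ℕ) (e : Fin (3*ℓ)) : Fin (2*ℓ+1) :=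
  ⟨if (e:ℕ) < 2*ℓ then e else if (e:ℕ) = 2*ℓ then 0 else (e:ℕ) - 2*ℓ, by
    have := e.isLt; split_ifs <;> omega⟩

/-- Target map of the witness dag. -/
def eDst (ℓ : ℕ) (e : Fin (3*ℓ)) : Fin (2*ℓ+1) :=
  ⟨if (e:ℕ) < 2*ℓ then (e:ℕ)+1 else if (e:ℕ) = 2*ℓ then 1 else 4*ℓ - e, by
    have := e.isLt; split_ifs <;> omega⟩

lemma eSrc_lt_eDst (ℓ : ℕ) (e : Fin (3*ℓ)) : (eSrc ℓ e : ℕ) < eDst ℓ e := by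
  have := e.isLt
  simp only [eSrc, eDst]
  split_ifs <;> omega

lemma vStep_lt {ℓ : ℕ} {u v : Fin (2*ℓ+1)} (h : vStep (eSrc ℓ) (eDst ℓ) u v) :
    (u:ℕ) < v := by
  obtain ⟨e, he1, he2⟩ := h
  rw [← he1, ← he2]
  exact eSrc_lt_eDst ℓ e

lemma transGen_lt {ℓ : ℕ} {u v : Fin (2*ℓ+1)}
    (h : Relation.TransGen (vStep (eSrc ℓ) (eDst ℓ)) u v) : (u:ℕ) < v := by
  induction h with
  | single h => exact vStep_lt h
  | tail _ h ih => exact ih.trans (vStep_lt h)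

lemma step_vStep {ℓ : ℕ} (u v : Fin (2*ℓ+1)) (h : (v:ℕ) = (u:ℕ) + 1) :
    vStep (eSrc ℓ) (eDst ℓ) u v := by
  have hu : (u:ℕ) < 2*ℓ := by have := v.isLt; omega
  refine ⟨⟨u, by omega⟩, ?_, ?_⟩
  · apply Fin.ext
    simp only [eSrc]
    rw [if_pos (by simpa using hu)]
  · apply Fin.ext
    simp only [eDst]
    rw [if_pos (by simpa using hu)]
    omega

lemma chainAux (ℓ : ℕ) : ∀ (k : ℕ) (u v : Fin (2*ℓ+1)), (v:ℕ) = (u:ℕ) + k + 1 →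
    Relation.TransGen (vStep (eSrc ℓ) (eDst ℓ)) u v := by
  intro k
  induction k with
  | zero =>
    intro u v h
    exact Relation.TransGen.single (step_vStep u v (by omega))
  | succ k ih =>
    intro u v h
    have hm : (u:ℕ) + 1 < 2*ℓ+1 := by have := v.isLt; omega
    exact Relation.TransGen.head (step_vStep u ⟨(u:ℕ)+1, hm⟩ rfl)
      (ih ⟨(u:ℕ)+1, hm⟩ v (by simp; omega))

lemma spineLT (ℓ : ℕ) : ∀ (k : ℕ) (a b : Fin (3*ℓ)), (b:ℕ) = (a:ℕ) + k + 1 →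
    (b:ℕ) < 2*ℓ → lineLT (eSrc ℓ) (eDst ℓ) a b := by
  intro k
  induction k with
  | zero =>
    intro a b h hb
    apply Relation.TransGen.single
    apply Fin.ext
    simp only [eSrc, eDst]
    rw [if_pos (show (a:ℕ) < 2*ℓ by omega), if_pos (show (b:ℕ) < 2*ℓ from hb)]
    omega
  | succ k ih =>
    intro a b h hb
    have hm : (a:ℕ) + 1 < 3*ℓ := by have := b.isLt; omega
    apply Relation.TransGen.head (b := ⟨(a:ℕ)+1, hm⟩)
    · apply Fin.ext
      simp only [eSrc, eDst]
      rw [if_pos (show (a:ℕ) < 2*ℓ by omega), if_pos (show (a:ℕ)+1 < 2*ℓ by omega)]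
    · exact ih ⟨(a:ℕ)+1, hm⟩ b (by simp; omega) hb

/-- for every `ℓ ≥ 1` there is an N-free order `R_ℓ` with `3ℓ`
elements, given as the line-digraph order of a dag whose transitive-closure
order on vertices is a chain (width 1), such that every linear extension of
`R_ℓ` has some active set of size at least `ℓ`; i.e. `α(R_ℓ) ≥ ℓ`.  Hence
bounded width of the arc diagram does not imply bounded activity. -/
theorem stmt10 (ℓ : ℕ) (hℓ : 1 ≤ ℓ) :
    ∃ (V E : Type) (fV : Fintype V) (fE : Fintype E) (src dst : E → V),
      (∀ v : V, ¬ Relation.TransGen (vStep src dst) v v) ∧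
      (@Fintype.card E fE = 3 * ℓ) ∧
      (∀ u v : V, u = v ∨ Relation.TransGen (vStep src dst) u v ∨
        Relation.TransGen (vStep src dst) v u) ∧
      ∀ L : E ≃ Fin (@Fintype.card E fE),
        (∀ x y : E, lineLT src dst x y → L x < L y) →
        ∃ i : ℕ, ℓ ≤ (activeSet src dst L i).ncard := by
  refine ⟨Fin (2*ℓ+1), Fin (3*ℓ), inferInstance, inferInstance, eSrc ℓ, eDst ℓ,
    ?_, ?_, ?_, ?_⟩
  · intro v h
    exact absurd (transGen_lt h) (lt_irrefl _)
  · simp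
  · intro u v
    rcases lt_trichotomy (u:ℕ) (v:ℕ) with h | h | h
    · exact Or.inr (Or.inl (chainAux ℓ ((v:ℕ) - (u:ℕ) - 1) u v (by omega)))
    · exact Or.inl (Fin.ext h)
    · exact Or.inr (Or.inr (chainAux ℓ ((u:ℕ) - (v:ℕ) - 1) v u (by omega)))
  · intro L hext
    -- the cut is at the position of the spine arc ℓ : x_ℓ → x_{ℓ+1}
    have hcard : Fintype.card (Fin (3*ℓ)) = 3*ℓ := by simp
    set arcl : Fin (3*ℓ) := ⟨ℓ, by omega⟩ with harcl
    set i : ℕ := (L arcl : ℕ) with hi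
    refine ⟨i, ?_⟩
    -- the long arcs
    set tA : ℕ → Fin (3*ℓ) := fun m =>
      if h : 2*ℓ + m < 3*ℓ then ⟨2*ℓ + m, h⟩ else ⟨0, by omega⟩ with htA
    have htv : ∀ m, m < ℓ → ((tA m : ℕ)) = 2*ℓ + m := by
      intro m hm
      simp only [htA]
      rw [dif_pos (by omega)]
    -- the witness function picking ℓ distinct active vertices
    set g : ℕ → Fin (2*ℓ+1) := fun j =>
      if hj0 : j = 0 then ⟨ℓ, by omega⟩
      else if hj : j < ℓ then
        (if (L (tA j) : ℕ) < i then ⟨2*ℓ - j, by omega⟩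
          else ⟨j, by omega⟩)
      else ⟨0, by omega⟩ with hg
    apply Set.le_ncard_of_inj_on_range g
    · -- membership
      intro j hj
      by_cases hj0 : j = 0
      · -- the vertex x_ℓ, in-arc is spine arc ℓ-1, out-arc is arcl itself
        have hgj : g j = ⟨ℓ, by omega⟩ := by simp [hg, hj0]
        rw [hgj]
        refine ⟨⟨ℓ-1, by omega⟩, arcl, ⟨?_, le_refl i⟩, ?_, ?_⟩
        · have := hext ⟨ℓ-1, by omega⟩ arcl (spineLT ℓ 0 _ _ (by simp only [harcl, Fin.val_mk]; omega) (by simp only [harcl, Fin.val_mk]; omega))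
          exact this
        · apply Fin.ext
          simp only [eDst]
          rw [if_pos (show ℓ-1 < 2*ℓ by omega)]
          omega
        · apply Fin.ext
          simp only [eSrc, harcl]
          rw [if_pos (show ℓ < 2*ℓ by omega)]
      · -- 1 ≤ j ≤ ℓ-1; long arc t = 2ℓ+j
        have hj1 : 1 ≤ j := by omega
        have htj : ((tA j : ℕ)) = 2*ℓ + j := htv j hj
        by_cases hlt : (L (tA j) : ℕ) < i
        · -- vertex x_{2ℓ-j}: in-arc t, out-arc spine arc 2ℓ-j
          have hgj : g j = ⟨2*ℓ - j, by omega⟩ := by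
            simp only [hg]
            rw [dif_neg hj0, dif_pos hj, if_pos hlt]
          rw [hgj]
          refine ⟨tA j, ⟨2*ℓ - j, by omega⟩, ⟨hlt, ?_⟩, ?_, ?_⟩
          · have := hext arcl ⟨2*ℓ - j, by omega⟩
              (spineLT ℓ (ℓ - j - 1) _ _ (by simp only [harcl, Fin.val_mk]; omega) (by simp; omega))
            rw [hi]
            omega
          · apply Fin.ext
            simp only [eDst]
            rw [if_neg (show ¬ ((tA j : ℕ) < 2*ℓ) by omega),
              if_neg (show ¬ ((tA j : ℕ) = 2*ℓ) by omega)]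
            omega
          · apply Fin.ext
            simp only [eSrc]
            rw [if_pos (show 2*ℓ - j < 2*ℓ by omega)]
        · -- vertex x_j: in-arc spine arc j-1, out-arc t
          have hgj : g j = ⟨j, by omega⟩ := by
            simp only [hg]
            rw [dif_neg hj0, dif_pos hj, if_neg hlt]
          rw [hgj]
          refine ⟨⟨j-1, by omega⟩, tA j, ⟨?_, by omega⟩, ?_, ?_⟩
          · have := hext ⟨j-1, by omega⟩ arcl
              (spineLT ℓ (ℓ - j) _ _ (by simp only [harcl, Fin.val_mk]; omega) (by simp only [harcl, Fin.val_mk]; omega))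
            exact this
          · apply Fin.ext
            simp only [eDst]
            rw [if_pos (show j-1 < 2*ℓ by omega)]
            omega
          · apply Fin.ext
            simp only [eSrc]
            rw [if_neg (show ¬ ((tA j : ℕ) < 2*ℓ) by omega),
              if_neg (show ¬ ((tA j : ℕ) = 2*ℓ) by omega)]
            omega
    · -- injectivity on range ℓ
      intro j hj k hk hjk
      have hvals : (g j : ℕ) = (g k : ℕ) := by rw [hjk]
      have gval : ∀ m, ∀ hm : m < ℓ, (g m : ℕ) = if m = 0 then ℓ
          else (if (L (tA m) : ℕ) < i then 2*ℓ - m else m) := by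
        intro m hm
        by_cases hm0 : m = 0
        · simp [hg, hm0]
        · simp only [hg]
          rw [dif_neg hm0, dif_pos hm]
          split_ifs <;> rfl
      rw [gval j hj, gval k hk] at hvals
      split_ifs at hvals <;> omega
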